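/- Let b_n be the sum of the total number of ancestral configurations c(t) over all ordered binary trees t with n leaves, and a_n the corresponding sum of root configurations c_r(t). Then b_1 = 0 and for n ≥ 2, b_n = 2 * sum_{j=1}^{n-1} b_j C_{n-1-j} + a_n. Equivalently, the generating functions T(z) = sum b_n z^n and R(z) = sum a_n z^n satisfy T(z) = 2 z C(z) T(z) + R(z) as formal power series. -/

import Mathlib

inductive BTree where
  | leaf : BTree
  | node : BTree → BTree → BTree

def BTree.nLeaves : BTree → ℕ
  | .leaf => 1
  | .node l r => l.nLeaves + r.nLeaves

/-- Number of root ancestral configurations. -/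
def BTree.cr : BTree → ℕ
  | .leaf => 0
  | .node l r => (l.cr + 1) * (r.cr + 1)

/-- Total number of ancestral configurations. -/
def BTree.ctot : BTree → ℕ
  | .leaf => 0
  | .node l r => l.ctot + r.ctot + (BTree.node l r).cr

/-- The m-th Catalan number C_m = binomial(2m, m)/(m+1). -/
def catalanNum (m : ℕ) : ℕ := (2 * m).choose m / (m + 1)

/-- a_n: the sum of the root configuration counts over all ordered binary trees
with n leaves. -/
noncomputable def a (n : ℕ) : ℕ := ∑ᶠ t : {t : BTree // t.nLeaves = n}, (t : BTree).cr

/-- b_n: the sum of the total configuration counts over all ordered binary trees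
with n leaves. -/
noncomputable def b (n : ℕ) : ℕ := ∑ᶠ t : {t : BTree // t.nLeaves = n}, (t : BTree).ctot

noncomputable def Rser : PowerSeries ℕ := PowerSeries.mk a
noncomputable def Tser : PowerSeries ℕ := PowerSeries.mk b
noncomputable def Cser : PowerSeries ℕ := PowerSeries.mk catalanNum

/- ### Auxiliary material -/

deriving instance DecidableEq for BTree

namespace BTree

def toTree : BTree → Tree Unit
  | .leaf => .nil
  | .node l r => Tree.node () (toTree l) (toTree r)

def ofTree : Tree Unit → BTree
  | .nil => .leaf
  | .node _ l r => .node (ofTree l) (ofTree r)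

lemma ofTree_toTree : ∀ t : BTree, ofTree (toTree t) = t
  | .leaf => rfl
  | .node l r => by simp [toTree, ofTree, ofTree_toTree l, ofTree_toTree r]

lemma toTree_ofTree : ∀ u : Tree Unit, toTree (ofTree u) = u
  | .nil => rfl
  | .node _ l r => by simp [toTree, ofTree, toTree_ofTree l, toTree_ofTree r]

lemma nLeaves_eq : ∀ t : BTree, t.nLeaves = (toTree t).numNodes + 1
  | .leaf => rfl
  | .node l r => by
      simp only [nLeaves, toTree, Tree.numNodes, BinaryTree.numNodes, nLeaves_eq l, nLeaves_eq r]
      omega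

lemma one_le_nLeaves (t : BTree) : 1 ≤ t.nLeaves := by
  rw [nLeaves_eq]; omega

/-- The finset of ordered binary trees with `n` leaves. -/
def S : ℕ → Finset BTree
  | 0 => ∅
  | m + 1 => (Tree.treesOfNumNodesEq m).image ofTree

lemma mem_S {t : BTree} {n : ℕ} : t ∈ S n ↔ t.nLeaves = n := by
  cases n with
  | zero =>
      simp only [S, Finset.notMem_empty, false_iff]
      have := one_le_nLeaves t; omega
  | succ m =>
      simp only [S, Finset.mem_image, BinaryTree.mem_treesOfNumNodesEq]
      constructor
      · rintro ⟨u, hu, rfl⟩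
        rw [nLeaves_eq, toTree_ofTree, Tree.numNodes, hu]
      · intro h
        refine ⟨toTree t, ?_, ofTree_toTree t⟩
        have := nLeaves_eq t; simp only [Tree.numNodes] at this; omega

lemma card_S (m : ℕ) : (S (m + 1)).card = catalan m := by
  rw [S, Finset.card_image_of_injective _
    (Function.LeftInverse.injective toTree_ofTree),
    BinaryTree.treesOfNumNodesEq_card_eq_catalan]

end BTree

lemma catalanNum_eq (m : ℕ) : catalanNum m = catalan m := by
  rw [catalan_eq_centralBinom_div]; rfl

lemma card_S_eq (m : ℕ) : (BTree.S (m + 1)).card = catalanNum m := by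
  rw [BTree.card_S, catalanNum_eq]

noncomputable instance (n : ℕ) : Fintype {t : BTree // t.nLeaves = n} :=
  Fintype.subtype (BTree.S n) (fun _ => BTree.mem_S)

lemma a_eq (n : ℕ) : a n = ∑ t ∈ BTree.S n, t.cr := by
  rw [a, finsum_eq_sum_of_fintype]
  exact (Finset.sum_subtype (BTree.S n) (fun _ => BTree.mem_S) _).symm

lemma b_eq (n : ℕ) : b n = ∑ t ∈ BTree.S n, t.ctot := by
  rw [b, finsum_eq_sum_of_fintype]
  exact (Finset.sum_subtype (BTree.S n) (fun _ => BTree.mem_S) _).symm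

/-- Decomposition of the sum over trees with `n ≥ 2` leaves as a sum over
pairs of subtrees. -/
lemma sum_S_node (n : ℕ) (hn : 2 ≤ n) (f : BTree → ℕ) :
    ∑ t ∈ BTree.S n, f t
      = ∑ j ∈ Finset.Icc 1 (n - 1), ∑ l ∈ BTree.S j, ∑ r ∈ BTree.S (n - j),
          f (BTree.node l r) := by
  have key : BTree.S n =
      ((Finset.Icc 1 (n - 1)).sigma
        (fun j => BTree.S j ×ˢ BTree.S (n - j))).image
        (fun x => BTree.node x.2.1 x.2.2) := by
    ext t
    simp only [Finset.mem_image, Finset.mem_sigma, Finset.mem_product,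
      BTree.mem_S, Finset.mem_Icc]
    constructor
    · intro ht
      cases t with
      | leaf => simp [BTree.nLeaves] at ht; omega
      | node l r =>
          have hl := BTree.one_le_nLeaves l
          have hr := BTree.one_le_nLeaves r
          have hlr : l.nLeaves + r.nLeaves = n := ht
          refine ⟨⟨l.nLeaves, (l, r)⟩, ?_, rfl⟩
          refine ⟨⟨?_, ?_⟩, ?_, ?_⟩ <;> dsimp only <;> omega
    · rintro ⟨⟨j, l, r⟩, ⟨⟨h1, h2⟩, hl, hr⟩, rfl⟩
      dsimp only at h1 h2 hl hr ⊢
      show l.nLeaves + r.nLeaves = n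
      omega
  rw [key, Finset.sum_image, Finset.sum_sigma]
  · refine Finset.sum_congr rfl fun j _ => ?_
    exact Finset.sum_product (BTree.S j) (BTree.S (n - j))
      (fun p => f (BTree.node p.1 p.2))
  · rintro ⟨j, l, r⟩ hx ⟨j', l', r'⟩ hy h
    simp only [Finset.coe_sigma, Set.mem_sigma_iff, Finset.mem_coe, Finset.mem_sigma, Finset.mem_product, BTree.mem_S] at hx hy
    dsimp only at hx hy h
    injection h with h1 h2
    subst h1; subst h2
    have : j = j' := hx.2.1.symm.trans hy.2.1
    subst this; rfl

lemma b_zero : b 0 = 0 := by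
  rw [b_eq]; rfl

lemma b_one : b 1 = 0 := by
  rw [b_eq]
  show ∑ t ∈ (BinaryTree.treesOfNumNodesEq 0).image BTree.ofTree, t.ctot = 0
  rw [BinaryTree.treesOfNumNodesEq_zero]
  rfl

lemma a_zero : a 0 = 0 := by
  rw [a_eq]; rfl

lemma a_one : a 1 = 0 := by
  rw [a_eq]
  show ∑ t ∈ (BinaryTree.treesOfNumNodesEq 0).image BTree.ofTree, t.cr = 0
  rw [BinaryTree.treesOfNumNodesEq_zero]
  rfl

lemma sum_Icc_reflect (n : ℕ) (g : ℕ → ℕ) :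
    ∑ j ∈ Finset.Icc 1 (n - 1), g j = ∑ j ∈ Finset.Icc 1 (n - 1), g (n - j) := by
  refine Finset.sum_nbij' (fun j => n - j) (fun j => n - j) ?_ ?_ ?_ ?_ ?_ <;>
    intro j hj <;> simp only [Finset.mem_Icc] at hj ⊢
  · omega
  · omega
  · omega
  · omega
  · congr 1; omega

lemma b_recurrence (n : ℕ) (hn : 2 ≤ n) :
    b n = 2 * (∑ j ∈ Finset.Icc 1 (n - 1), b j * catalanNum (n - 1 - j)) + a n := by
  have hA : ∀ j ∈ Finset.Icc 1 (n - 1),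
      ∑ l ∈ BTree.S j, ∑ r ∈ BTree.S (n - j), l.ctot
        = b j * catalanNum (n - 1 - j) := by
    intro j hj
    simp only [Finset.mem_Icc] at hj
    have h1 : n - j = (n - 1 - j) + 1 := by omega
    rw [b_eq]
    calc ∑ l ∈ BTree.S j, ∑ _r ∈ BTree.S (n - j), l.ctot
        = ∑ l ∈ BTree.S j, l.ctot * (BTree.S (n - j)).card := by
          simp [Finset.sum_const, Nat.mul_comm]
      _ = (∑ l ∈ BTree.S j, l.ctot) * (BTree.S (n - j)).card := by
          rw [Finset.sum_mul]
      _ = _ := by rw [h1, card_S_eq]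
  have hB : ∀ j ∈ Finset.Icc 1 (n - 1),
      ∑ l ∈ BTree.S j, ∑ r ∈ BTree.S (n - j), r.ctot
        = catalanNum (j - 1) * b (n - j) := by
    intro j hj
    simp only [Finset.mem_Icc] at hj
    have h1 : j = (j - 1) + 1 := by omega
    rw [Finset.sum_const, smul_eq_mul, b_eq, h1, card_S_eq]
    norm_num
  have expand : ∀ j ∈ Finset.Icc 1 (n - 1),
      ∑ l ∈ BTree.S j, ∑ r ∈ BTree.S (n - j), (BTree.node l r).ctot
        = (∑ l ∈ BTree.S j, ∑ r ∈ BTree.S (n - j), l.ctot)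
          + (∑ l ∈ BTree.S j, ∑ r ∈ BTree.S (n - j), r.ctot)
          + (∑ l ∈ BTree.S j, ∑ r ∈ BTree.S (n - j), (BTree.node l r).cr) := by
    intro j _
    simp only [BTree.ctot, Finset.sum_add_distrib]
  rw [b_eq, sum_S_node n hn, Finset.sum_congr rfl expand, Finset.sum_add_distrib,
    Finset.sum_add_distrib, Finset.sum_congr rfl hA, Finset.sum_congr rfl hB,
    a_eq, sum_S_node n hn BTree.cr, two_mul]
  have hrefl : ∑ j ∈ Finset.Icc 1 (n - 1), catalanNum (j - 1) * b (n - j)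
      = ∑ j ∈ Finset.Icc 1 (n - 1), b j * catalanNum (n - 1 - j) := by
    rw [sum_Icc_reflect n (fun j => catalanNum (j - 1) * b (n - j))]
    refine Finset.sum_congr rfl fun j hj => ?_
    simp only [Finset.mem_Icc] at hj
    have h1 : n - j - 1 = n - 1 - j := by omega
    have h2 : n - (n - j) = j := by omega
    rw [h1, h2, Nat.mul_comm]
  rw [hrefl]

lemma anti_eq (n : ℕ) (hn : 1 ≤ n) :
    ∑ p ∈ Finset.HasAntidiagonal.antidiagonal (n - 1), catalanNum p.1 * b p.2
      = ∑ j ∈ Finset.Icc 1 (n - 1), b j * catalanNum (n - 1 - j) := by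
  rw [Finset.Nat.sum_antidiagonal_eq_sum_range_succ (fun i j => catalanNum i * b j),
    Finset.sum_range_succ, Nat.sub_self, b_zero, Nat.mul_zero, Nat.add_zero]
  refine Finset.sum_nbij' (fun k => n - 1 - k) (fun j => n - 1 - j) ?_ ?_ ?_ ?_ ?_ <;>
    intro k hk <;>
      simp only [Finset.mem_range, Finset.mem_Icc] at hk ⊢
  · omega
  · omega
  · omega
  · omega
  · have h2 : n - 1 - (n - 1 - k) = k := by omega
    rw [h2, Nat.mul_comm]

open PowerSeries in
theorem total_config_recurrence :
    b 1 = 0 ∧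
    (∀ n : ℕ, 2 ≤ n → b n =
      2 * (∑ j ∈ Finset.Icc 1 (n - 1), b j * catalanNum (n - 1 - j)) + a n) ∧
    Tser = 2 * X * Cser * Tser + Rser := by
  refine ⟨b_one, b_recurrence, ?_⟩
  have hmain : ∀ n : ℕ, 1 ≤ n →
      b n = 2 * (∑ j ∈ Finset.Icc 1 (n - 1), b j * catalanNum (n - 1 - j)) + a n := by
    intro n hn
    rcases Nat.lt_or_ge n 2 with h2 | h2
    · interval_cases n
      simp [b_one, a_one]
    · exact b_recurrence n h2
  apply PowerSeries.ext
  intro n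
  rw [show (2 : PowerSeries ℕ) * X * Cser * Tser + Rser
      = (X * (Cser * Tser) + X * (Cser * Tser)) + Rser by ring]
  rw [map_add, map_add, Tser, Rser, PowerSeries.coeff_mk, PowerSeries.coeff_mk]
  cases n with
  | zero => rw [PowerSeries.coeff_zero_X_mul, b_zero, a_zero]; simp
  | succ k =>
      rw [PowerSeries.coeff_succ_X_mul, PowerSeries.coeff_mul]
      simp only [Cser, Tser, PowerSeries.coeff_mk]
      have h1 : 1 ≤ k + 1 := by omega
      have := anti_eq (k + 1) h1
      simp only [Nat.add_sub_cancel] at this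
      rw [this, hmain (k + 1) h1, Nat.add_sub_cancel]
      ring
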